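/- Every symmetric linearly distributive category in which ⊥ carries a ⊗-comonoid structure ⟨⊥, Δ_⊥ : ⊥ → ⊥ ⊗ ⊥, e_⊥ : ⊥ → ⊤⟩ is mix, with mix map m = e_⊥; dually, every symmetric linearly distributive category in which ⊤ carries a ⊕-monoid structure ⟨⊤, ∇_⊤ : ⊤ ⊕ ⊤ → ⊤, u_⊤ : ⊥ → ⊤⟩ is mix with m = u_⊤. -/
import Mathlib


open CategoryTheory

universe v u

/-- A monoidal structure on a category, given by explicit data. -/
structure MonStr (V : Type u) [Category.{v} V] where
  t : V → V → V
  map : ∀ {X₁ Y₁ X₂ Y₂ : V}, (X₁ ⟶ Y₁) → (X₂ ⟶ Y₂) → (t X₁ X₂ ⟶ t Y₁ Y₂)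
  map_id : ∀ X Y, map (𝟙 X) (𝟙 Y) = 𝟙 (t X Y)
  map_comp : ∀ {X₁ Y₁ Z₁ X₂ Y₂ Z₂ : V} (f₁ : X₁ ⟶ Y₁) (g₁ : Y₁ ⟶ Z₁)
    (f₂ : X₂ ⟶ Y₂) (g₂ : Y₂ ⟶ Z₂),
    map (f₁ ≫ g₁) (f₂ ≫ g₂) = map f₁ f₂ ≫ map g₁ g₂
  e : V
  a : ∀ X Y Z, t (t X Y) Z ≅ t X (t Y Z)
  a_nat : ∀ {X₁ Y₁ X₂ Y₂ X₃ Y₃ : V} (f₁ : X₁ ⟶ Y₁) (f₂ : X₂ ⟶ Y₂) (f₃ : X₃ ⟶ Y₃),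
    map (map f₁ f₂) f₃ ≫ (a Y₁ Y₂ Y₃).hom = (a X₁ X₂ X₃).hom ≫ map f₁ (map f₂ f₃)
  l : ∀ X, t e X ≅ X
  r : ∀ X, t X e ≅ X
  l_nat : ∀ {X Y : V} (f : X ⟶ Y), map (𝟙 e) f ≫ (l Y).hom = (l X).hom ≫ f
  r_nat : ∀ {X Y : V} (f : X ⟶ Y), map f (𝟙 e) ≫ (r Y).hom = (r X).hom ≫ f
  pentagon : ∀ W X Y Z,
    map (a W X Y).hom (𝟙 Z) ≫ (a W (t X Y) Z).hom ≫ map (𝟙 W) (a X Y Z).hom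
      = (a (t W X) Y Z).hom ≫ (a W X (t Y Z)).hom
  triangle : ∀ X Y, (a X e Y).hom ≫ map (𝟙 X) (l Y).hom = map (r X).hom (𝟙 Y)

/-- A symmetric monoidal structure on a category, given by explicit data. -/
structure SymMonStr (V : Type u) [Category.{v} V] extends MonStr V where
  b : ∀ X Y, t X Y ≅ t Y X
  b_nat : ∀ {X₁ Y₁ X₂ Y₂ : V} (f : X₁ ⟶ Y₁) (g : X₂ ⟶ Y₂),
    map f g ≫ (b Y₁ Y₂).hom = (b X₁ X₂).hom ≫ map g f
  symmetry : ∀ X Y, (b X Y).hom ≫ (b Y X).hom = 𝟙 (t X Y)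
  hexagon : ∀ X Y Z,
    (a X Y Z).hom ≫ (b X (t Y Z)).hom ≫ (a Y Z X).hom
      = map (b X Y).hom (𝟙 Z) ≫ (a Y X Z).hom ≫ map (𝟙 Y) (b X Z).hom

/-- The canonical flip `(W ⊗ X) ⊗ (Y ⊗ Z) ⟶ (W ⊗ Y) ⊗ (X ⊗ Z)` of a symmetric
monoidal structure. -/
def SymMonStr.flip {V : Type u} [Category.{v} V] (M : SymMonStr V) (W X Y Z : V) :
    M.t (M.t W X) (M.t Y Z) ⟶ M.t (M.t W Y) (M.t X Z) :=
  (M.a W X (M.t Y Z)).hom ≫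
    M.map (𝟙 W) ((M.a X Y Z).inv ≫ M.map (M.b X Y).hom (𝟙 Z) ≫ (M.a Y X Z).hom) ≫
    (M.a W Y (M.t X Z)).inv

/-- `⟨A, Δ, e⟩` is a comonoid with respect to the monoidal structure `M`. -/
def MonStr.IsComonoid {V : Type u} [Category.{v} V] (M : MonStr V) (A : V)
    (Δ : A ⟶ M.t A A) (e : A ⟶ M.e) : Prop :=
  (Δ ≫ M.map Δ (𝟙 A) ≫ (M.a A A A).hom = Δ ≫ M.map (𝟙 A) Δ) ∧
  (Δ ≫ M.map e (𝟙 A) ≫ (M.l A).hom = 𝟙 A) ∧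
  (Δ ≫ M.map (𝟙 A) e ≫ (M.r A).hom = 𝟙 A)

/-- `⟨A, ∇, u⟩` is a monoid with respect to the monoidal structure `M`. -/
def MonStr.IsMonoid {V : Type u} [Category.{v} V] (M : MonStr V) (A : V)
    (m : M.t A A ⟶ A) (u : M.e ⟶ A) : Prop :=
  (M.map m (𝟙 A) ≫ m = (M.a A A A).hom ≫ M.map (𝟙 A) m ≫ m) ∧
  (M.map u (𝟙 A) ≫ m = (M.l A).hom) ∧
  (M.map (𝟙 A) u ≫ m = (M.r A).hom)
/-- A linearly distributive category structure: a tensor monoidal structure `T`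
(unit `⊤ = T.e`), a par monoidal structure `P` (unit `⊥ = P.e`), and natural
left and right linear distributivities satisfying the coherence conditions
(LDC.1)–(LDC.3). -/
structure LDCStr (V : Type u) [Category.{v} V] where
  T : MonStr V
  P : MonStr V
  δL : ∀ A B X : V, T.t A (P.t B X) ⟶ P.t (T.t A B) X
  δR : ∀ A B X : V, T.t (P.t A B) X ⟶ P.t A (T.t B X)
  δL_nat : ∀ {A A' B B' X X' : V} (f : A ⟶ A') (g : B ⟶ B') (h : X ⟶ X'),
    T.map f (P.map g h) ≫ δL A' B' X' = δL A B X ≫ P.map (T.map f g) h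
  δR_nat : ∀ {A A' B B' X X' : V} (f : A ⟶ A') (g : B ⟶ B') (h : X ⟶ X'),
    T.map (P.map f g) h ≫ δR A' B' X' = δR A B X ≫ P.map f (T.map g h)
  -- (LDC.1)
  unit_δL : ∀ A B, (T.l (P.t A B)).inv ≫ δL T.e A B = P.map (T.l A).inv (𝟙 B)
  unit_δR : ∀ A B, (T.r (P.t A B)).inv ≫ δR A B T.e = P.map (𝟙 A) (T.r B).inv
  counit_δR : ∀ A B, δR P.e A B ≫ (P.l (T.t A B)).hom = T.map (P.l A).hom (𝟙 B)
  counit_δL : ∀ A B, δL A B P.e ≫ (P.r (T.t A B)).hom = T.map (𝟙 A) (P.r B).hom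
  -- (LDC.2)
  assoc_δL : ∀ A B X Y, δL (T.t A B) X Y ≫ P.map (T.a A B X).hom (𝟙 Y)
    = (T.a A B (P.t X Y)).hom ≫ T.map (𝟙 A) (δL B X Y) ≫ δL A (T.t B X) Y
  assoc_δR : ∀ A B X Y, (T.a (P.t A B) X Y).hom ≫ δR A B (T.t X Y)
    = T.map (δR A B X) (𝟙 Y) ≫ δR A (T.t B X) Y ≫ P.map (𝟙 A) (T.a B X Y).hom
  assoc_δL' : ∀ A B X Y, δL A B (P.t X Y) ≫ (P.a (T.t A B) X Y).inv
    = T.map (𝟙 A) (P.a B X Y).inv ≫ δL A (P.t B X) Y ≫ P.map (δL A B X) (𝟙 Y)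
  assoc_δR' : ∀ A B X Y, T.map (P.a A B X).inv (𝟙 Y) ≫ δR (P.t A B) X Y
    = δR A (P.t B X) Y ≫ P.map (𝟙 A) (δR B X Y) ≫ (P.a A B (T.t X Y)).inv
  -- (LDC.3)
  leftright₁ : ∀ A B X Y, δL (P.t A B) X Y ≫ P.map (δR A B X) (𝟙 Y)
    = δR A B (P.t X Y) ≫ P.map (𝟙 A) (δL B X Y) ≫ (P.a A (T.t B X) Y).inv
  leftright₂ : ∀ A B X Y, T.map (δL A B X) (𝟙 Y) ≫ δR (T.t A B) X Y
    = (T.a A (P.t B X) Y).hom ≫ T.map (𝟙 A) (δR B X Y) ≫ δL A B (T.t X Y)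

/-- The mix condition for a linearly distributive category with respect to a map
`m : ⊥ ⟶ ⊤`: the two canonical composites `A ⊗ B ⟶ A ⊕ B` built from `m`, the
unitors, and the linear distributivities agree. -/
def LDCStr.IsMix {V : Type u} [Category.{v} V] (L : LDCStr V)
    (m : L.P.e ⟶ L.T.e) : Prop :=
  ∀ A B : V,
    L.T.map ((L.P.r A).inv ≫ L.P.map (𝟙 A) m) (𝟙 B) ≫ L.δR A L.T.e B ≫
        L.P.map (𝟙 A) (L.T.l B).hom
      = L.T.map (𝟙 A) ((L.P.l B).inv ≫ L.P.map m (𝟙 B)) ≫ L.δL A L.T.e B ≫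
        L.P.map (L.T.r A).hom (𝟙 B)
/-- A symmetric linearly distributive category: an LDC whose tensor and par
structures carry symmetric braidings interacting coherently with the linear
distributivities (condition (SLDC)). -/
structure SLDCStr (V : Type u) [Category.{v} V] where
  L : LDCStr V
  bT : ∀ X Y, L.T.t X Y ≅ L.T.t Y X
  bT_nat : ∀ {X₁ Y₁ X₂ Y₂ : V} (f : X₁ ⟶ Y₁) (g : X₂ ⟶ Y₂),
    L.T.map f g ≫ (bT Y₁ Y₂).hom = (bT X₁ X₂).hom ≫ L.T.map g f
  bT_symmetry : ∀ X Y, (bT X Y).hom ≫ (bT Y X).hom = 𝟙 (L.T.t X Y)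
  bT_hexagon : ∀ X Y Z,
    (L.T.a X Y Z).hom ≫ (bT X (L.T.t Y Z)).hom ≫ (L.T.a Y Z X).hom
      = L.T.map (bT X Y).hom (𝟙 Z) ≫ (L.T.a Y X Z).hom ≫ L.T.map (𝟙 Y) (bT X Z).hom
  bP : ∀ X Y, L.P.t X Y ≅ L.P.t Y X
  bP_nat : ∀ {X₁ Y₁ X₂ Y₂ : V} (f : X₁ ⟶ Y₁) (g : X₂ ⟶ Y₂),
    L.P.map f g ≫ (bP Y₁ Y₂).hom = (bP X₁ X₂).hom ≫ L.P.map g f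
  bP_symmetry : ∀ X Y, (bP X Y).hom ≫ (bP Y X).hom = 𝟙 (L.P.t X Y)
  bP_hexagon : ∀ X Y Z,
    (L.P.a X Y Z).hom ≫ (bP X (L.P.t Y Z)).hom ≫ (L.P.a Y Z X).hom
      = L.P.map (bP X Y).hom (𝟙 Z) ≫ (L.P.a Y X Z).hom ≫ L.P.map (𝟙 Y) (bP X Z).hom
  -- (SLDC): the linear distributivities interact coherently with the braidings
  sldc : ∀ A B X : V,
    L.δR A B X
      = (bT (L.P.t A B) X).hom ≫ L.T.map (𝟙 X) (bP A B).hom ≫ L.δL X B A ≫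
          L.P.map (bT X B).hom (𝟙 A) ≫ (bP (L.T.t B X) A).hom

namespace MonStr

variable {V : Type u} [Category.{v} V] (M : MonStr V)

lemma map_id' (X Y : V) : M.map (𝟙 X) (𝟙 Y) = 𝟙 (M.t X Y) := M.map_id X Y

lemma map_comp_left {X Y Z : V} (f : X ⟶ Y) (g : Y ⟶ Z) (W : V) :
    M.map (f ≫ g) (𝟙 W) = M.map f (𝟙 W) ≫ M.map g (𝟙 W) := by
  rw [← M.map_comp, Category.comp_id]

lemma map_comp_right (W : V) {X Y Z : V} (f : X ⟶ Y) (g : Y ⟶ Z) :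
    M.map (𝟙 W) (f ≫ g) = M.map (𝟙 W) f ≫ M.map (𝟙 W) g := by
  rw [← M.map_comp, Category.comp_id]

lemma map_exchange {X₁ Y₁ X₂ Y₂ : V} (f : X₁ ⟶ Y₁) (g : X₂ ⟶ Y₂) :
    M.map f (𝟙 X₂) ≫ M.map (𝟙 Y₁) g = M.map (𝟙 X₁) g ≫ M.map f (𝟙 Y₂) := by
  rw [← M.map_comp, ← M.map_comp, Category.id_comp, Category.comp_id,
    Category.id_comp, Category.comp_id]

lemma hom_inv_left {X Y : V} (i : X ≅ Y) (W : V) :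
    M.map i.hom (𝟙 W) ≫ M.map i.inv (𝟙 W) = 𝟙 (M.t X W) := by
  rw [← M.map_comp, Iso.hom_inv_id, Category.comp_id, M.map_id']

lemma inv_hom_left {X Y : V} (i : X ≅ Y) (W : V) :
    M.map i.inv (𝟙 W) ≫ M.map i.hom (𝟙 W) = 𝟙 (M.t Y W) := by
  rw [← M.map_comp, Iso.inv_hom_id, Category.comp_id, M.map_id']

lemma hom_inv_right {X Y : V} (W : V) (i : X ≅ Y) :
    M.map (𝟙 W) i.hom ≫ M.map (𝟙 W) i.inv = 𝟙 (M.t W X) := by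
  rw [← M.map_comp, Iso.hom_inv_id, Category.comp_id, M.map_id']

lemma inv_hom_right {X Y : V} (W : V) (i : X ≅ Y) :
    M.map (𝟙 W) i.inv ≫ M.map (𝟙 W) i.hom = 𝟙 (M.t W Y) := by
  rw [← M.map_comp, Iso.inv_hom_id, Category.comp_id, M.map_id']

lemma cancel_left {X Y : V} {f g : X ⟶ Y}
    (h : M.map (𝟙 M.e) f = M.map (𝟙 M.e) g) : f = g := by
  have hf := M.l_nat f
  have hg := M.l_nat g
  calc f = (M.l X).inv ≫ ((M.l X).hom ≫ f) := by rw [Iso.inv_hom_id_assoc]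
    _ = (M.l X).inv ≫ (M.map (𝟙 M.e) f ≫ (M.l Y).hom) := by rw [← hf]
    _ = (M.l X).inv ≫ (M.map (𝟙 M.e) g ≫ (M.l Y).hom) := by rw [h]
    _ = (M.l X).inv ≫ ((M.l X).hom ≫ g) := by rw [hg]
    _ = g := by rw [Iso.inv_hom_id_assoc]

lemma cancel_right {X Y : V} {f g : X ⟶ Y}
    (h : M.map f (𝟙 M.e) = M.map g (𝟙 M.e)) : f = g := by
  have hf := M.r_nat f
  have hg := M.r_nat g
  calc f = (M.r X).inv ≫ ((M.r X).hom ≫ f) := by rw [Iso.inv_hom_id_assoc]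
    _ = (M.r X).inv ≫ (M.map f (𝟙 M.e) ≫ (M.r Y).hom) := by rw [← hf]
    _ = (M.r X).inv ≫ (M.map g (𝟙 M.e) ≫ (M.r Y).hom) := by rw [h]
    _ = (M.r X).inv ≫ ((M.r X).hom ≫ g) := by rw [hg]
    _ = g := by rw [Iso.inv_hom_id_assoc]

lemma l_inv_nat {X Y : V} (f : X ⟶ Y) :
    f ≫ (M.l Y).inv = (M.l X).inv ≫ M.map (𝟙 M.e) f := by
  rw [Iso.comp_inv_eq, Category.assoc, M.l_nat, Iso.inv_hom_id_assoc]

lemma r_inv_nat {X Y : V} (f : X ⟶ Y) :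
    f ≫ (M.r Y).inv = (M.r X).inv ≫ M.map f (𝟙 M.e) := by
  rw [Iso.comp_inv_eq, Category.assoc, M.r_nat, Iso.inv_hom_id_assoc]

lemma a_inv_nat {X₁ Y₁ X₂ Y₂ X₃ Y₃ : V} (f₁ : X₁ ⟶ Y₁) (f₂ : X₂ ⟶ Y₂) (f₃ : X₃ ⟶ Y₃) :
    M.map f₁ (M.map f₂ f₃) ≫ (M.a Y₁ Y₂ Y₃).inv
      = (M.a X₁ X₂ X₃).inv ≫ M.map (M.map f₁ f₂) f₃ := by
  rw [Iso.comp_inv_eq, Category.assoc, M.a_nat, Iso.inv_hom_id_assoc]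

lemma l_unit_unit : (M.l (M.t M.e M.e)).hom = M.map (𝟙 M.e) (M.l M.e).hom := by
  have h := M.l_nat (M.l M.e).hom
  exact ((Iso.cancel_iso_hom_right _ _ (M.l M.e)).mp h).symm

lemma leftUnitor_tensor (X Y : V) :
    (M.a M.e X Y).hom ≫ (M.l (M.t X Y)).hom = M.map (M.l X).hom (𝟙 Y) := by
  apply M.cancel_left
  rw [M.map_comp_right]
  have tri1 : M.map (𝟙 M.e) (M.l (M.t X Y)).hom
      = (M.a M.e M.e (M.t X Y)).inv ≫ M.map (M.r M.e).hom (𝟙 (M.t X Y)) := by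
    rw [← M.triangle, Iso.inv_hom_id_assoc]
  have pent : M.map (𝟙 M.e) (M.a M.e X Y).hom ≫ (M.a M.e M.e (M.t X Y)).inv
      = (M.a M.e (M.t M.e X) Y).inv ≫ M.map (M.a M.e M.e X).inv (𝟙 Y)
          ≫ (M.a (M.t M.e M.e) X Y).hom := by
    rw [Iso.comp_inv_eq]
    simp only [Category.assoc]
    rw [← M.pentagon, reassoc_of% (M.inv_hom_left (M.a M.e M.e X) Y),
      Iso.inv_hom_id_assoc]
  have anat : (M.a (M.t M.e M.e) X Y).hom ≫ M.map (M.r M.e).hom (𝟙 (M.t X Y))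
      = M.map (M.map (M.r M.e).hom (𝟙 X)) (𝟙 Y) ≫ (M.a M.e X Y).hom := by
    have h := M.a_nat (M.r M.e).hom (𝟙 X) (𝟙 Y)
    rw [M.map_id'] at h
    exact h.symm
  have tri2 : (M.a M.e M.e X).inv ≫ M.map (M.r M.e).hom (𝟙 X)
      = M.map (𝟙 M.e) (M.l X).hom := by
    rw [Iso.inv_comp_eq, M.triangle]
  calc M.map (𝟙 M.e) (M.a M.e X Y).hom ≫ M.map (𝟙 M.e) (M.l (M.t X Y)).hom
      = M.map (𝟙 M.e) (M.a M.e X Y).hom ≫ (M.a M.e M.e (M.t X Y)).inv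
          ≫ M.map (M.r M.e).hom (𝟙 (M.t X Y)) := by rw [tri1]
    _ = (M.a M.e (M.t M.e X) Y).inv ≫ M.map (M.a M.e M.e X).inv (𝟙 Y)
          ≫ (M.a (M.t M.e M.e) X Y).hom ≫ M.map (M.r M.e).hom (𝟙 (M.t X Y)) := by
        rw [reassoc_of% pent]
    _ = (M.a M.e (M.t M.e X) Y).inv ≫ M.map (M.a M.e M.e X).inv (𝟙 Y)
          ≫ M.map (M.map (M.r M.e).hom (𝟙 X)) (𝟙 Y) ≫ (M.a M.e X Y).hom := by
        rw [anat]
    _ = (M.a M.e (M.t M.e X) Y).inv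
          ≫ M.map ((M.a M.e M.e X).inv ≫ M.map (M.r M.e).hom (𝟙 X)) (𝟙 Y)
          ≫ (M.a M.e X Y).hom := by
        simp only [M.map_comp_left, Category.assoc]
    _ = (M.a M.e (M.t M.e X) Y).inv ≫ M.map (M.map (𝟙 M.e) (M.l X).hom) (𝟙 Y)
          ≫ (M.a M.e X Y).hom := by rw [tri2]
    _ = (M.a M.e (M.t M.e X) Y).inv ≫ (M.a M.e (M.t M.e X) Y).hom
          ≫ M.map (𝟙 M.e) (M.map (M.l X).hom (𝟙 Y)) := by rw [M.a_nat]
    _ = M.map (𝟙 M.e) (M.map (M.l X).hom (𝟙 Y)) := by rw [Iso.inv_hom_id_assoc]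

lemma unitors_equal : (M.l M.e).hom = (M.r M.e).hom := by
  apply M.cancel_right
  have k2 := M.leftUnitor_tensor M.e M.e
  rw [M.l_unit_unit, M.triangle] at k2
  exact k2.symm

lemma unitors_equal_inv : (M.l M.e).inv = (M.r M.e).inv :=
  (Iso.inv_eq_inv _ _).mpr M.unitors_equal

end MonStr
namespace LDCStr

variable {V : Type u} [Category.{v} V] (L : LDCStr V) (m : L.P.e ⟶ L.T.e)

/-- `mixL` composite `A ⊗ B ⟶ A ⊕ B`. -/
def mixL (A B : V) : L.T.t A B ⟶ L.P.t A B :=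
  L.T.map (𝟙 A) ((L.P.l B).inv ≫ L.P.map m (𝟙 B)) ≫ L.δL A L.T.e B ≫
    L.P.map (L.T.r A).hom (𝟙 B)

/-- `mixR` composite `A ⊗ B ⟶ A ⊕ B`. -/
def mixR (A B : V) : L.T.t A B ⟶ L.P.t A B :=
  L.T.map ((L.P.r A).inv ≫ L.P.map (𝟙 A) m) (𝟙 B) ≫ L.δR A L.T.e B ≫
    L.P.map (𝟙 A) (L.T.l B).hom

lemma isMix_def : L.IsMix m ↔ ∀ A B, L.mixR m A B = L.mixL m A B := Iff.rfl

def kL : L.T.t L.P.e L.P.e ⟶ L.P.e := L.T.map m (𝟙 L.P.e) ≫ (L.T.l L.P.e).hom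
def kR : L.T.t L.P.e L.P.e ⟶ L.P.e := L.T.map (𝟙 L.P.e) m ≫ (L.T.r L.P.e).hom

def hL : L.T.e ⟶ L.P.t L.T.e L.T.e := (L.P.l L.T.e).inv ≫ L.P.map m (𝟙 L.T.e)
def hR : L.T.e ⟶ L.P.t L.T.e L.T.e := (L.P.r L.T.e).inv ≫ L.P.map (𝟙 L.T.e) m

/-- The common composite through `⊥ ⊗ ⊥`. -/
def big (k : L.T.t L.P.e L.P.e ⟶ L.P.e) (A B : V) : L.T.t A B ⟶ L.P.t A B :=
  L.T.map (L.P.r A).inv (L.P.l B).inv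
    ≫ L.δR A L.P.e (L.P.t L.P.e B)
    ≫ L.P.map (𝟙 A) (L.δL L.P.e L.P.e B)
    ≫ L.P.map (𝟙 A) (L.P.map k (𝟙 B))
    ≫ L.P.map (𝟙 A) (L.P.l B).hom

/-- The common composite through `⊤ ⊕ ⊤`. -/
def big' (h : L.T.e ⟶ L.P.t L.T.e L.T.e) (A B : V) : L.T.t A B ⟶ L.P.t A B :=
  L.T.map (𝟙 A) (L.T.l B).inv
    ≫ L.T.map (𝟙 A) (L.T.map h (𝟙 B))
    ≫ L.T.map (𝟙 A) (L.δR L.T.e L.T.e B)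
    ≫ L.δL A L.T.e (L.T.t L.T.e B)
    ≫ L.P.map (L.T.r A).hom (L.T.l B).hom

/- unit/counit consequences -/

lemma dL_top (A B : V) :
    L.δL L.T.e A B = (L.T.l (L.P.t A B)).hom ≫ L.P.map (L.T.l A).inv (𝟙 B) := by
  rw [← L.unit_δL, Iso.hom_inv_id_assoc]

lemma dL_top_cancel (A B : V) :
    L.δL L.T.e A B ≫ L.P.map (L.T.l A).hom (𝟙 B) = (L.T.l (L.P.t A B)).hom := by
  rw [L.dL_top, Category.assoc, L.P.inv_hom_left, Category.comp_id]

lemma dR_bot (A B : V) :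
    L.δR A B L.T.e = (L.T.r (L.P.t A B)).hom ≫ L.P.map (𝟙 A) (L.T.r B).inv := by
  rw [← L.unit_δR, Iso.hom_inv_id_assoc]

lemma dR_bot_cancel (A B : V) :
    L.δR A B L.T.e ≫ L.P.map (𝟙 A) (L.T.r B).hom = (L.T.r (L.P.t A B)).hom := by
  rw [L.dR_bot, Category.assoc, L.P.inv_hom_right, Category.comp_id]

lemma dR_bot_inv (A B : V) :
    L.T.map (L.P.l A).inv (𝟙 B) ≫ L.δR L.P.e A B = (L.P.l (L.T.t A B)).inv := by
  have h : (L.T.map (L.P.l A).inv (𝟙 B) ≫ L.δR L.P.e A B) ≫ (L.P.l (L.T.t A B)).hom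
      = 𝟙 _ := by
    rw [Category.assoc, L.counit_δR, L.T.inv_hom_left]
  exact (Iso.comp_hom_eq_id _).mp h

lemma dL_bot_inv (A B : V) :
    L.T.map (𝟙 A) (L.P.r B).inv ≫ L.δL A B L.P.e = (L.P.r (L.T.t A B)).inv := by
  have h : (L.T.map (𝟙 A) (L.P.r B).inv ≫ L.δL A B L.P.e) ≫ (L.P.r (L.T.t A B)).hom
      = 𝟙 _ := by
    rw [Category.assoc, L.counit_δL, L.T.inv_hom_right]
  exact (Iso.comp_hom_eq_id _).mp h

lemma q1 : L.T.map (𝟙 L.P.e) (L.P.l L.P.e).inv ≫ L.δL L.P.e L.P.e L.P.e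
    = (L.P.r (L.T.t L.P.e L.P.e)).inv := by
  rw [L.P.unitors_equal_inv, L.dL_bot_inv]

lemma q2 : L.T.map (L.P.l L.P.e).inv (𝟙 L.P.e) ≫ L.δR L.P.e L.P.e L.P.e
    = (L.P.l (L.T.t L.P.e L.P.e)).inv := L.dR_bot_inv L.P.e L.P.e

lemma q1' : L.δR L.T.e L.T.e L.T.e ≫ L.P.map (𝟙 L.T.e) (L.T.l L.T.e).hom
    = (L.T.r (L.P.t L.T.e L.T.e)).hom := by
  rw [L.T.unitors_equal, L.dR_bot_cancel]

lemma q2' : L.δL L.T.e L.T.e L.T.e ≫ L.P.map (L.T.l L.T.e).hom (𝟙 L.T.e)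
    = (L.T.l (L.P.t L.T.e L.T.e)).hom := L.dL_top_cancel L.T.e L.T.e

end LDCStr
namespace LDCStr

variable {V : Type u} [Category.{v} V] (L : LDCStr V) (m : L.P.e ⟶ L.T.e)

lemma inner_kL (B : V) :
    L.δL L.P.e L.P.e B ≫ L.P.map (L.kL m) (𝟙 B) ≫ (L.P.l B).hom
      = L.T.map m (L.P.l B).hom ≫ (L.T.l B).hom := by
  have h2 : L.δL L.P.e L.P.e B ≫ L.P.map (L.T.map m (𝟙 L.P.e)) (𝟙 B)
      = L.T.map m (𝟙 (L.P.t L.P.e B)) ≫ L.δL L.T.e L.P.e B := by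
    have h := L.δL_nat m (𝟙 L.P.e) (𝟙 B)
    rw [L.P.map_id'] at h
    exact h.symm
  have h3 : L.T.map m (𝟙 (L.P.t L.P.e B)) ≫ L.T.map (𝟙 L.T.e) (L.P.l B).hom
      = L.T.map m (L.P.l B).hom := by
    rw [← L.T.map_comp, Category.comp_id, Category.id_comp]
  simp only [LDCStr.kL, L.P.map_comp_left, Category.assoc]
  rw [reassoc_of% h2, reassoc_of% (L.dL_top_cancel L.P.e B), ← L.T.l_nat,
    reassoc_of% h3]

lemma big_kL (A B : V) : L.big (L.kL m) A B = L.mixR m A B := by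
  have hsplit : L.P.map (𝟙 A) (L.δL L.P.e L.P.e B)
        ≫ L.P.map (𝟙 A) (L.P.map (L.kL m) (𝟙 B))
        ≫ L.P.map (𝟙 A) (L.P.l B).hom
      = L.P.map (𝟙 A) (L.T.map m (L.P.l B).hom)
        ≫ L.P.map (𝟙 A) (L.T.l B).hom := by
    rw [← L.P.map_comp_right, ← L.P.map_comp_right, L.inner_kL, L.P.map_comp_right]
  have hnat : L.δR A L.P.e (L.P.t L.P.e B) ≫ L.P.map (𝟙 A) (L.T.map m (L.P.l B).hom)
      = L.T.map (L.P.map (𝟙 A) m) (L.P.l B).hom ≫ L.δR A L.T.e B :=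
    (L.δR_nat (𝟙 A) m (L.P.l B).hom).symm
  have hpre : L.T.map (L.P.r A).inv (L.P.l B).inv
        ≫ L.T.map (L.P.map (𝟙 A) m) (L.P.l B).hom
      = L.T.map ((L.P.r A).inv ≫ L.P.map (𝟙 A) m) (𝟙 B) := by
    rw [← L.T.map_comp, Iso.inv_hom_id]
  simp only [LDCStr.big, LDCStr.mixR, Category.assoc]
  rw [hsplit, reassoc_of% hnat, reassoc_of% hpre]

lemma inner_kR (B : V) :
    L.δL L.P.e L.P.e B ≫ L.P.map (L.kR m) (𝟙 B)
      = L.T.map (𝟙 L.P.e) (L.P.map m (𝟙 B)) ≫ L.δL L.P.e L.T.e B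
          ≫ L.P.map (L.T.r L.P.e).hom (𝟙 B) := by
  have h2 : L.δL L.P.e L.P.e B ≫ L.P.map (L.T.map (𝟙 L.P.e) m) (𝟙 B)
      = L.T.map (𝟙 L.P.e) (L.P.map m (𝟙 B)) ≫ L.δL L.P.e L.T.e B :=
    (L.δL_nat (𝟙 L.P.e) m (𝟙 B)).symm
  simp only [LDCStr.kR, L.P.map_comp_left]
  rw [reassoc_of% h2]

lemma big_kR (A B : V) : L.big (L.kR m) A B = L.mixL m A B := by
  -- combine the two middle factors and rewrite with inner_kR
  have hsplit : L.P.map (𝟙 A) (L.δL L.P.e L.P.e B)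
        ≫ L.P.map (𝟙 A) (L.P.map (L.kR m) (𝟙 B))
      = L.P.map (𝟙 A) (L.T.map (𝟙 L.P.e) (L.P.map m (𝟙 B)))
        ≫ L.P.map (𝟙 A) (L.δL L.P.e L.T.e B)
        ≫ L.P.map (𝟙 A) (L.P.map (L.T.r L.P.e).hom (𝟙 B)) := by
    rw [← L.P.map_comp_right, L.inner_kR, L.P.map_comp_right, L.P.map_comp_right]
  have hnat : L.δR A L.P.e (L.P.t L.P.e B)
        ≫ L.P.map (𝟙 A) (L.T.map (𝟙 L.P.e) (L.P.map m (𝟙 B)))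
      = L.T.map (𝟙 (L.P.t A L.P.e)) (L.P.map m (𝟙 B)) ≫ L.δR A L.P.e (L.P.t L.T.e B) := by
    have h := L.δR_nat (𝟙 A) (𝟙 L.P.e) (L.P.map m (𝟙 B))
    rw [L.P.map_id'] at h
    exact h.symm
  have lr : L.δR A L.P.e (L.P.t L.T.e B) ≫ L.P.map (𝟙 A) (L.δL L.P.e L.T.e B)
      = L.δL (L.P.t A L.P.e) L.T.e B ≫ L.P.map (L.δR A L.P.e L.T.e) (𝟙 B)
          ≫ (L.P.a A (L.T.t L.P.e L.T.e) B).hom := by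
    have h := L.leftright₁ A L.P.e L.T.e B
    calc L.δR A L.P.e (L.P.t L.T.e B) ≫ L.P.map (𝟙 A) (L.δL L.P.e L.T.e B)
        = (L.δR A L.P.e (L.P.t L.T.e B) ≫ L.P.map (𝟙 A) (L.δL L.P.e L.T.e B)
            ≫ (L.P.a A (L.T.t L.P.e L.T.e) B).inv)
            ≫ (L.P.a A (L.T.t L.P.e L.T.e) B).hom := by
          simp only [Category.assoc, Iso.inv_hom_id, Category.comp_id]
      _ = (L.δL (L.P.t A L.P.e) L.T.e B ≫ L.P.map (L.δR A L.P.e L.T.e) (𝟙 B))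
            ≫ (L.P.a A (L.T.t L.P.e L.T.e) B).hom := by rw [← h]
      _ = _ := by rw [Category.assoc]
  -- δR A ⊥ ⊤ is a unitor composite
  have hdr : L.P.map (L.δR A L.P.e L.T.e) (𝟙 B)
      = L.P.map (L.T.r (L.P.t A L.P.e)).hom (𝟙 B)
        ≫ L.P.map (L.P.map (𝟙 A) (L.T.r L.P.e).inv) (𝟙 B) := by
    rw [← L.P.map_comp_left, ← L.dR_bot]
  have han : L.P.map (L.P.map (𝟙 A) (L.T.r L.P.e).inv) (𝟙 B)
        ≫ (L.P.a A (L.T.t L.P.e L.T.e) B).hom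
      = (L.P.a A L.P.e B).hom ≫ L.P.map (𝟙 A) (L.P.map (L.T.r L.P.e).inv (𝟙 B)) :=
    L.P.a_nat (𝟙 A) (L.T.r L.P.e).inv (𝟙 B)
  have hcan : L.P.map (𝟙 A) (L.P.map (L.T.r L.P.e).inv (𝟙 B))
        ≫ L.P.map (𝟙 A) (L.P.map (L.T.r L.P.e).hom (𝟙 B)) = 𝟙 _ := by
    rw [← L.P.map_comp_right, L.P.inv_hom_left, L.P.map_id']
  have htri : (L.P.a A L.P.e B).hom ≫ L.P.map (𝟙 A) (L.P.l B).hom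
      = L.P.map (L.P.r A).hom (𝟙 B) := L.P.triangle A B
  have hr1 : L.P.map (L.T.r (L.P.t A L.P.e)).hom (𝟙 B) ≫ L.P.map (L.P.r A).hom (𝟙 B)
      = L.P.map (L.T.map (L.P.r A).hom (𝟙 L.T.e)) (𝟙 B) ≫ L.P.map (L.T.r A).hom (𝟙 B) := by
    rw [← L.P.map_comp_left, ← L.P.map_comp_left, L.T.r_nat]
  have hdl : L.δL (L.P.t A L.P.e) L.T.e B ≫ L.P.map (L.T.map (L.P.r A).hom (𝟙 L.T.e)) (𝟙 B)
      = L.T.map (L.P.r A).hom (𝟙 (L.P.t L.T.e B)) ≫ L.δL A L.T.e B := by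
    have h := L.δL_nat (L.P.r A).hom (𝟙 L.T.e) (𝟙 B)
    rw [L.P.map_id'] at h
    exact h.symm
  have hpre : L.T.map (L.P.r A).inv (L.P.l B).inv
        ≫ L.T.map (𝟙 (L.P.t A L.P.e)) (L.P.map m (𝟙 B))
        ≫ L.T.map (L.P.r A).hom (𝟙 (L.P.t L.T.e B))
      = L.T.map (𝟙 A) ((L.P.l B).inv ≫ L.P.map m (𝟙 B)) := by
    simp only [← L.T.map_comp, Category.comp_id, Category.id_comp, Iso.inv_hom_id]
  simp only [LDCStr.big, LDCStr.mixL, Category.assoc]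
  rw [reassoc_of% hsplit, reassoc_of% hnat, reassoc_of% lr, hdr]
  simp only [Category.assoc]
  rw [reassoc_of% han, reassoc_of% hcan, htri, hr1, reassoc_of% hdl,
    reassoc_of% hpre]

end LDCStr
namespace LDCStr

variable {V : Type u} [Category.{v} V] (L : LDCStr V) (m : L.P.e ⟶ L.T.e)

/-- The auxiliary natural map `⊥ ⊗ X ⟶ X`. -/
def gL (X : V) : L.T.t L.P.e X ⟶ X :=
  L.T.map (𝟙 L.P.e) (L.P.l X).inv ≫ L.δL L.P.e L.P.e X
    ≫ L.P.map (L.kR m) (𝟙 X) ≫ (L.P.l X).hom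

lemma gL_bot : L.gL m L.P.e = L.kR m := by
  simp only [LDCStr.gL]
  rw [L.P.unitors_equal, L.P.r_nat, reassoc_of% (L.counit_δL L.P.e L.P.e),
    ← L.P.unitors_equal, reassoc_of% (L.T.inv_hom_right L.P.e (L.P.l L.P.e))]

lemma gL_nat {X Y : V} (f : X ⟶ Y) :
    L.T.map (𝟙 L.P.e) f ≫ L.gL m Y = L.gL m X ≫ f := by
  have h1 : L.T.map (𝟙 L.P.e) f ≫ L.T.map (𝟙 L.P.e) (L.P.l Y).inv
      = L.T.map (𝟙 L.P.e) (L.P.l X).inv ≫ L.T.map (𝟙 L.P.e) (L.P.map (𝟙 L.P.e) f) := by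
    rw [← L.T.map_comp_right, L.P.l_inv_nat, L.T.map_comp_right]
  have h2 : L.T.map (𝟙 L.P.e) (L.P.map (𝟙 L.P.e) f) ≫ L.δL L.P.e L.P.e Y
      = L.δL L.P.e L.P.e X ≫ L.P.map (𝟙 (L.T.t L.P.e L.P.e)) f := by
    have h := L.δL_nat (𝟙 L.P.e) (𝟙 L.P.e) f
    rw [L.T.map_id'] at h
    exact h
  have h3 : L.P.map (𝟙 (L.T.t L.P.e L.P.e)) f ≫ L.P.map (L.kR m) (𝟙 Y)
      = L.P.map (L.kR m) (𝟙 X) ≫ L.P.map (𝟙 L.P.e) f :=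
    (L.P.map_exchange (L.kR m) f).symm
  simp only [LDCStr.gL, Category.assoc]
  rw [reassoc_of% h1, reassoc_of% h2, reassoc_of% h3, L.P.l_nat]

lemma e0 : L.T.map (L.P.r (L.T.t L.P.e L.P.e)).inv (𝟙 L.P.e)
      ≫ L.δR (L.T.t L.P.e L.P.e) L.P.e L.P.e
    = (L.T.a L.P.e L.P.e L.P.e).hom
      ≫ L.T.map (𝟙 L.P.e) (L.P.l (L.T.t L.P.e L.P.e)).inv
      ≫ L.δL L.P.e L.P.e (L.T.t L.P.e L.P.e) := by
  have lr := L.leftright₂ L.P.e L.P.e L.P.e L.P.e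
  have w1 : L.T.map (L.P.r (L.T.t L.P.e L.P.e)).inv (𝟙 L.P.e)
      = L.T.map (L.T.map (𝟙 L.P.e) (L.P.l L.P.e).inv) (𝟙 L.P.e)
        ≫ L.T.map (L.δL L.P.e L.P.e L.P.e) (𝟙 L.P.e) := by
    rw [← L.T.map_comp_left, L.q1]
  have w2 : L.T.map (L.T.map (𝟙 L.P.e) (L.P.l L.P.e).inv) (𝟙 L.P.e)
        ≫ (L.T.a L.P.e (L.P.t L.P.e L.P.e) L.P.e).hom
      = (L.T.a L.P.e L.P.e L.P.e).hom
        ≫ L.T.map (𝟙 L.P.e) (L.T.map (L.P.l L.P.e).inv (𝟙 L.P.e)) :=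
    L.T.a_nat (𝟙 L.P.e) (L.P.l L.P.e).inv (𝟙 L.P.e)
  have w3 : L.T.map (𝟙 L.P.e) (L.T.map (L.P.l L.P.e).inv (𝟙 L.P.e))
        ≫ L.T.map (𝟙 L.P.e) (L.δR L.P.e L.P.e L.P.e)
      = L.T.map (𝟙 L.P.e) (L.P.l (L.T.t L.P.e L.P.e)).inv := by
    rw [← L.T.map_comp_right, L.q2]
  rw [w1, Category.assoc, lr, reassoc_of% w2, reassoc_of% w3]

lemma e1 (Δ : L.P.e ⟶ L.T.t L.P.e L.P.e) (hΔ : Δ ≫ L.kR m = 𝟙 L.P.e) :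
    L.T.map Δ (𝟙 L.P.e) ≫ (L.T.a L.P.e L.P.e L.P.e).hom
      ≫ L.gL m (L.T.t L.P.e L.P.e) = 𝟙 (L.T.t L.P.e L.P.e) := by
  simp only [LDCStr.gL]
  rw [← reassoc_of% (L.e0)]
  have hn : L.δR (L.T.t L.P.e L.P.e) L.P.e L.P.e
        ≫ L.P.map (L.kR m) (𝟙 (L.T.t L.P.e L.P.e))
      = L.T.map (L.P.map (L.kR m) (𝟙 L.P.e)) (𝟙 L.P.e)
        ≫ L.δR L.P.e L.P.e L.P.e := by
    have h := L.δR_nat (L.kR m) (𝟙 L.P.e) (𝟙 L.P.e)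
    rw [L.T.map_id'] at h
    exact h.symm
  rw [reassoc_of% hn, L.counit_δR]
  have inner : Δ ≫ (L.P.r (L.T.t L.P.e L.P.e)).inv
      ≫ L.P.map (L.kR m) (𝟙 L.P.e) ≫ (L.P.l L.P.e).hom = 𝟙 L.P.e := by
    rw [L.P.unitors_equal, L.P.r_nat, Iso.inv_hom_id_assoc, hΔ]
  simp only [← L.T.map_comp_left, Category.assoc]
  rw [inner, L.T.map_id']

lemma b6 (Δ : L.P.e ⟶ L.T.t L.P.e L.P.e) (hΔ : Δ ≫ L.kR m = 𝟙 L.P.e) :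
    L.T.map Δ (𝟙 L.P.e) ≫ (L.T.a L.P.e L.P.e L.P.e).hom
      ≫ L.T.map (𝟙 L.P.e) (L.kL m) = 𝟙 (L.T.t L.P.e L.P.e) := by
  simp only [LDCStr.kL]
  rw [L.T.map_comp_right]
  have h1 : (L.T.a L.P.e L.P.e L.P.e).hom ≫ L.T.map (𝟙 L.P.e) (L.T.map m (𝟙 L.P.e))
      = L.T.map (L.T.map (𝟙 L.P.e) m) (𝟙 L.P.e) ≫ (L.T.a L.P.e L.T.e L.P.e).hom :=
    (L.T.a_nat (𝟙 L.P.e) m (𝟙 L.P.e)).symm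
  have h2 : (L.T.a L.P.e L.T.e L.P.e).hom ≫ L.T.map (𝟙 L.P.e) (L.T.l L.P.e).hom
      = L.T.map (L.T.r L.P.e).hom (𝟙 L.P.e) := L.T.triangle L.P.e L.P.e
  rw [reassoc_of% h1, h2]
  have hΔ' : Δ ≫ L.T.map (𝟙 L.P.e) m ≫ (L.T.r L.P.e).hom = 𝟙 L.P.e := by
    simpa only [LDCStr.kR] using hΔ
  simp only [← L.T.map_comp_left, Category.assoc]
  rw [hΔ', L.T.map_id']

lemma kL_eq_kR (Δ : L.P.e ⟶ L.T.t L.P.e L.P.e) (hΔ : Δ ≫ L.kR m = 𝟙 L.P.e) :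
    L.kL m = L.kR m := by
  have h1 := L.e1 m Δ hΔ
  have h2 := L.gL_nat m (L.kL m)
  have h3 := L.b6 m Δ hΔ
  calc L.kL m
      = (L.T.map Δ (𝟙 L.P.e) ≫ (L.T.a L.P.e L.P.e L.P.e).hom
          ≫ L.gL m (L.T.t L.P.e L.P.e)) ≫ L.kL m := by rw [h1, Category.id_comp]
    _ = L.T.map Δ (𝟙 L.P.e) ≫ (L.T.a L.P.e L.P.e L.P.e).hom
          ≫ L.T.map (𝟙 L.P.e) (L.kL m) ≫ L.gL m L.P.e := by
        simp only [Category.assoc]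
        rw [h2]
    _ = (L.T.map Δ (𝟙 L.P.e) ≫ (L.T.a L.P.e L.P.e L.P.e).hom
          ≫ L.T.map (𝟙 L.P.e) (L.kL m)) ≫ L.gL m L.P.e := by
        simp only [Category.assoc]
    _ = L.gL m L.P.e := by rw [h3, Category.id_comp]
    _ = L.kR m := L.gL_bot m

lemma isMix_of_k (h : L.kL m = L.kR m) : L.IsMix m := by
  intro A B
  show L.mixR m A B = L.mixL m A B
  rw [← L.big_kL m A B, h, L.big_kR m A B]

end LDCStr
namespace LDCStr

variable {V : Type u} [Category.{v} V] (L : LDCStr V) (m : L.P.e ⟶ L.T.e)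

lemma mixL_nat (A : V) {B B' : V} (f : B ⟶ B') :
    L.T.map (𝟙 A) f ≫ L.mixL m A B' = L.mixL m A B ≫ L.P.map (𝟙 A) f := by
  have hin : f ≫ (L.P.l B').inv ≫ L.P.map m (𝟙 B')
      = ((L.P.l B).inv ≫ L.P.map m (𝟙 B)) ≫ L.P.map (𝟙 L.T.e) f := by
    rw [reassoc_of% (L.P.l_inv_nat f), ← L.P.map_exchange]
    simp only [Category.assoc]
  have h1 : L.T.map (𝟙 A) f ≫ L.T.map (𝟙 A) ((L.P.l B').inv ≫ L.P.map m (𝟙 B'))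
      = L.T.map (𝟙 A) ((L.P.l B).inv ≫ L.P.map m (𝟙 B))
        ≫ L.T.map (𝟙 A) (L.P.map (𝟙 L.T.e) f) := by
    rw [← L.T.map_comp_right, hin, L.T.map_comp_right]
  have h2 : L.T.map (𝟙 A) (L.P.map (𝟙 L.T.e) f) ≫ L.δL A L.T.e B'
      = L.δL A L.T.e B ≫ L.P.map (𝟙 (L.T.t A L.T.e)) f := by
    have h := L.δL_nat (𝟙 A) (𝟙 L.T.e) f
    rw [L.T.map_id'] at h
    exact h
  have h3 : L.P.map (𝟙 (L.T.t A L.T.e)) f ≫ L.P.map (L.T.r A).hom (𝟙 B')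
      = L.P.map (L.T.r A).hom (𝟙 B) ≫ L.P.map (𝟙 A) f :=
    (L.P.map_exchange (L.T.r A).hom f).symm
  simp only [LDCStr.mixL, Category.assoc]
  rw [reassoc_of% h1, reassoc_of% h2, h3]

lemma big'_hL (A B : V) : L.big' (L.hL m) A B = L.mixL m A B := by
  have s1 : L.T.map (L.hL m) (𝟙 B) ≫ L.δR L.T.e L.T.e B
      = (L.P.l (L.T.t L.T.e B)).inv ≫ L.P.map m (𝟙 (L.T.t L.T.e B)) := by
    have hd : L.T.map (L.P.map m (𝟙 L.T.e)) (𝟙 B) ≫ L.δR L.T.e L.T.e B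
        = L.δR L.P.e L.T.e B ≫ L.P.map m (𝟙 (L.T.t L.T.e B)) := by
      have h := L.δR_nat m (𝟙 L.T.e) (𝟙 B)
      rw [L.T.map_id'] at h
      exact h
    simp only [LDCStr.hL, L.T.map_comp_left, Category.assoc]
    rw [hd, reassoc_of% (L.dR_bot_inv L.T.e B)]
  have s2 : L.P.map (L.T.r A).hom (L.T.l B).hom
      = L.P.map (L.T.r A).hom (𝟙 (L.T.t L.T.e B)) ≫ L.P.map (𝟙 A) (L.T.l B).hom := by
    rw [← L.P.map_comp, Category.comp_id, Category.id_comp]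
  have fuse : L.T.map (𝟙 A) (L.T.map (L.hL m) (𝟙 B))
        ≫ L.T.map (𝟙 A) (L.δR L.T.e L.T.e B)
      = L.T.map (𝟙 A) ((L.P.l (L.T.t L.T.e B)).inv
          ≫ L.P.map m (𝟙 (L.T.t L.T.e B))) := by
    rw [← L.T.map_comp_right, s1]
  have step : L.big' (L.hL m) A B
      = L.T.map (𝟙 A) (L.T.l B).inv ≫ L.mixL m A (L.T.t L.T.e B)
          ≫ L.P.map (𝟙 A) (L.T.l B).hom := by
    simp only [LDCStr.big', LDCStr.mixL, Category.assoc]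
    rw [reassoc_of% fuse, s2]
  rw [step, ← L.mixL_nat, reassoc_of% (L.T.inv_hom_right A (L.T.l B))]

lemma big'_hR (A B : V) : L.big' (L.hR m) A B = L.mixR m A B := by
  have s1 : L.T.map (L.hR m) (𝟙 B) ≫ L.δR L.T.e L.T.e B
      = L.T.map (L.P.r L.T.e).inv (𝟙 B) ≫ L.δR L.T.e L.P.e B
          ≫ L.P.map (𝟙 L.T.e) (L.T.map m (𝟙 B)) := by
    simp only [LDCStr.hR, L.T.map_comp_left, Category.assoc]
    rw [L.δR_nat (𝟙 L.T.e) m (𝟙 B)]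
  have s2 : L.T.map (𝟙 A) (L.P.map (𝟙 L.T.e) (L.T.map m (𝟙 B)))
        ≫ L.δL A L.T.e (L.T.t L.T.e B)
      = L.δL A L.T.e (L.T.t L.P.e B)
          ≫ L.P.map (𝟙 (L.T.t A L.T.e)) (L.T.map m (𝟙 B)) := by
    have h := L.δL_nat (𝟙 A) (𝟙 L.T.e) (L.T.map m (𝟙 B))
    rw [L.T.map_id'] at h
    exact h
  have s3 : L.T.map (𝟙 A) (L.δR L.T.e L.P.e B) ≫ L.δL A L.T.e (L.T.t L.P.e B)
      = (L.T.a A (L.P.t L.T.e L.P.e) B).inv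
          ≫ L.T.map (L.δL A L.T.e L.P.e) (𝟙 B)
          ≫ L.δR (L.T.t A L.T.e) L.P.e B := by
    have lr2 := L.leftright₂ A L.T.e L.P.e B
    calc L.T.map (𝟙 A) (L.δR L.T.e L.P.e B) ≫ L.δL A L.T.e (L.T.t L.P.e B)
        = (L.T.a A (L.P.t L.T.e L.P.e) B).inv ≫ (L.T.a A (L.P.t L.T.e L.P.e) B).hom
            ≫ L.T.map (𝟙 A) (L.δR L.T.e L.P.e B) ≫ L.δL A L.T.e (L.T.t L.P.e B) := by
          rw [Iso.inv_hom_id_assoc]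
      _ = _ := by rw [← lr2]
  have s4 : L.T.map (𝟙 A) (L.T.map (L.P.r L.T.e).inv (𝟙 B))
        ≫ (L.T.a A (L.P.t L.T.e L.P.e) B).inv
      = (L.T.a A L.T.e B).inv
          ≫ L.T.map (L.T.map (𝟙 A) (L.P.r L.T.e).inv) (𝟙 B) :=
    L.T.a_inv_nat (𝟙 A) (L.P.r L.T.e).inv (𝟙 B)
  have s5 : L.T.map (L.T.map (𝟙 A) (L.P.r L.T.e).inv) (𝟙 B)
        ≫ L.T.map (L.δL A L.T.e L.P.e) (𝟙 B)
      = L.T.map (L.P.r (L.T.t A L.T.e)).inv (𝟙 B) := by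
    rw [← L.T.map_comp_left, L.dL_bot_inv]
  have t1 : L.P.map (𝟙 (L.T.t A L.T.e)) (L.T.map m (𝟙 B))
        ≫ L.P.map (L.T.r A).hom (L.T.l B).hom
      = L.P.map (L.T.r A).hom (𝟙 (L.T.t L.P.e B))
          ≫ L.P.map (𝟙 A) (L.T.map m (𝟙 B)) ≫ L.P.map (𝟙 A) (L.T.l B).hom := by
    rw [← L.P.map_comp, ← L.P.map_comp, ← L.P.map_comp]
    simp only [Category.id_comp, Category.comp_id]
  have s6 : L.δR (L.T.t A L.T.e) L.P.e B ≫ L.P.map (L.T.r A).hom (𝟙 (L.T.t L.P.e B))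
      = L.T.map (L.P.map (L.T.r A).hom (𝟙 L.P.e)) (𝟙 B) ≫ L.δR A L.P.e B := by
    have h := L.δR_nat (L.T.r A).hom (𝟙 L.P.e) (𝟙 B)
    rw [L.T.map_id'] at h
    exact h.symm
  have s6b : L.T.map (L.P.r (L.T.t A L.T.e)).inv (𝟙 B)
        ≫ L.T.map (L.P.map (L.T.r A).hom (𝟙 L.P.e)) (𝟙 B)
      = L.T.map (L.T.r A).hom (𝟙 B) ≫ L.T.map (L.P.r A).inv (𝟙 B) := by
    rw [← L.T.map_comp_left, ← L.P.r_inv_nat, L.T.map_comp_left]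
  have tri : (L.T.a A L.T.e B).inv ≫ L.T.map (L.T.r A).hom (𝟙 B)
      = L.T.map (𝟙 A) (L.T.l B).hom := by
    rw [Iso.inv_comp_eq, L.T.triangle]
  have s8 : L.δR A L.P.e B ≫ L.P.map (𝟙 A) (L.T.map m (𝟙 B))
      = L.T.map (L.P.map (𝟙 A) m) (𝟙 B) ≫ L.δR A L.T.e B :=
    (L.δR_nat (𝟙 A) m (𝟙 B)).symm
  have fuse : L.T.map (𝟙 A) (L.T.map (L.hR m) (𝟙 B))
        ≫ L.T.map (𝟙 A) (L.δR L.T.e L.T.e B)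
      = L.T.map (𝟙 A) (L.T.map (L.P.r L.T.e).inv (𝟙 B))
        ≫ L.T.map (𝟙 A) (L.δR L.T.e L.P.e B)
        ≫ L.T.map (𝟙 A) (L.P.map (𝟙 L.T.e) (L.T.map m (𝟙 B))) := by
    rw [← L.T.map_comp_right, s1]
    simp only [L.T.map_comp_right, Category.assoc]
  simp only [LDCStr.big', LDCStr.mixR, Category.assoc]
  rw [reassoc_of% fuse, reassoc_of% s2, reassoc_of% s3, reassoc_of% s4,
    reassoc_of% s5, t1, reassoc_of% s6, reassoc_of% s6b,
    reassoc_of% tri, reassoc_of% (L.T.inv_hom_right A (L.T.l B)),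
    reassoc_of% s8]
  have pre : L.T.map (L.P.r A).inv (𝟙 B) ≫ L.T.map (L.P.map (𝟙 A) m) (𝟙 B)
      = L.T.map ((L.P.r A).inv ≫ L.P.map (𝟙 A) m) (𝟙 B) :=
    (L.T.map_comp_left _ _ _).symm
  rw [reassoc_of% pre]

/-- The dual auxiliary natural map `X ⟶ ⊤ ⊕ X`. -/
def gR (X : V) : X ⟶ L.P.t L.T.e X :=
  (L.T.l X).inv ≫ L.T.map (L.hR m) (𝟙 X) ≫ L.δR L.T.e L.T.e X
    ≫ L.P.map (𝟙 L.T.e) (L.T.l X).hom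

lemma gR_top : L.gR m L.T.e = L.hR m := by
  simp only [LDCStr.gR]
  rw [L.q1', L.T.r_nat, ← L.T.unitors_equal, Iso.inv_hom_id_assoc]

lemma gR_nat {X Y : V} (f : X ⟶ Y) :
    f ≫ L.gR m Y = L.gR m X ≫ L.P.map (𝟙 L.T.e) f := by
  have h1 : f ≫ (L.T.l Y).inv = (L.T.l X).inv ≫ L.T.map (𝟙 L.T.e) f :=
    L.T.l_inv_nat f
  have h2 : L.T.map (𝟙 L.T.e) f ≫ L.T.map (L.hR m) (𝟙 Y)
      = L.T.map (L.hR m) (𝟙 X) ≫ L.T.map (𝟙 (L.P.t L.T.e L.T.e)) f :=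
    (L.T.map_exchange (L.hR m) f).symm
  have h3 : L.T.map (𝟙 (L.P.t L.T.e L.T.e)) f ≫ L.δR L.T.e L.T.e Y
      = L.δR L.T.e L.T.e X ≫ L.P.map (𝟙 L.T.e) (L.T.map (𝟙 L.T.e) f) := by
    have h := L.δR_nat (𝟙 L.T.e) (𝟙 L.T.e) f
    rw [L.P.map_id'] at h
    exact h
  have h4 : L.P.map (𝟙 L.T.e) (L.T.map (𝟙 L.T.e) f) ≫ L.P.map (𝟙 L.T.e) (L.T.l Y).hom
      = L.P.map (𝟙 L.T.e) (L.T.l X).hom ≫ L.P.map (𝟙 L.T.e) f := by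
    rw [← L.P.map_comp_right, L.T.l_nat, L.P.map_comp_right]
  simp only [LDCStr.gR, Category.assoc]
  rw [reassoc_of% h1, reassoc_of% h2, reassoc_of% h3, h4]

lemma e0' : L.δR L.T.e L.T.e (L.P.t L.T.e L.T.e)
      ≫ L.P.map (𝟙 L.T.e) (L.T.l (L.P.t L.T.e L.T.e)).hom
      ≫ (L.P.a L.T.e L.T.e L.T.e).inv
    = L.δL (L.P.t L.T.e L.T.e) L.T.e L.T.e
      ≫ L.P.map (L.T.r (L.P.t L.T.e L.T.e)).hom (𝟙 L.T.e) := by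
  have lr := L.leftright₁ L.T.e L.T.e L.T.e L.T.e
  have w2 : L.P.map (𝟙 L.T.e) (L.P.map (L.T.l L.T.e).hom (𝟙 L.T.e))
        ≫ (L.P.a L.T.e L.T.e L.T.e).inv
      = (L.P.a L.T.e (L.T.t L.T.e L.T.e) L.T.e).inv
        ≫ L.P.map (L.P.map (𝟙 L.T.e) (L.T.l L.T.e).hom) (𝟙 L.T.e) :=
    L.P.a_inv_nat (𝟙 L.T.e) (L.T.l L.T.e).hom (𝟙 L.T.e)
  have w3 : L.P.map (L.δR L.T.e L.T.e L.T.e) (𝟙 L.T.e)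
        ≫ L.P.map (L.P.map (𝟙 L.T.e) (L.T.l L.T.e).hom) (𝟙 L.T.e)
      = L.P.map (L.T.r (L.P.t L.T.e L.T.e)).hom (𝟙 L.T.e) := by
    rw [← L.P.map_comp_left, L.q1']
  have fuse : L.P.map (𝟙 L.T.e) (L.δL L.T.e L.T.e L.T.e)
        ≫ L.P.map (𝟙 L.T.e) (L.P.map (L.T.l L.T.e).hom (𝟙 L.T.e))
      = L.P.map (𝟙 L.T.e) (L.T.l (L.P.t L.T.e L.T.e)).hom := by
    rw [← L.P.map_comp_right, L.q2']
  calc L.δR L.T.e L.T.e (L.P.t L.T.e L.T.e)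
        ≫ L.P.map (𝟙 L.T.e) (L.T.l (L.P.t L.T.e L.T.e)).hom
        ≫ (L.P.a L.T.e L.T.e L.T.e).inv
      = L.δR L.T.e L.T.e (L.P.t L.T.e L.T.e)
          ≫ L.P.map (𝟙 L.T.e) (L.δL L.T.e L.T.e L.T.e)
          ≫ L.P.map (𝟙 L.T.e) (L.P.map (L.T.l L.T.e).hom (𝟙 L.T.e))
          ≫ (L.P.a L.T.e L.T.e L.T.e).inv := by
        rw [← reassoc_of% fuse]
    _ = L.δR L.T.e L.T.e (L.P.t L.T.e L.T.e)
          ≫ L.P.map (𝟙 L.T.e) (L.δL L.T.e L.T.e L.T.e)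
          ≫ (L.P.a L.T.e (L.T.t L.T.e L.T.e) L.T.e).inv
          ≫ L.P.map (L.P.map (𝟙 L.T.e) (L.T.l L.T.e).hom) (𝟙 L.T.e) := by
        rw [w2]
    _ = L.δL (L.P.t L.T.e L.T.e) L.T.e L.T.e
          ≫ L.P.map (L.δR L.T.e L.T.e L.T.e) (𝟙 L.T.e)
          ≫ L.P.map (L.P.map (𝟙 L.T.e) (L.T.l L.T.e).hom) (𝟙 L.T.e) := by
        rw [← reassoc_of% lr]
    _ = _ := by rw [w3]

lemma e1' (n : L.P.t L.T.e L.T.e ⟶ L.T.e) (hRn : L.hR m ≫ n = 𝟙 L.T.e) :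
    L.gR m (L.P.t L.T.e L.T.e) ≫ (L.P.a L.T.e L.T.e L.T.e).inv
      ≫ L.P.map n (𝟙 L.T.e) = 𝟙 (L.P.t L.T.e L.T.e) := by
  simp only [LDCStr.gR, Category.assoc]
  rw [reassoc_of% (L.e0' )]
  have h2 : L.T.map (L.hR m) (𝟙 (L.P.t L.T.e L.T.e))
        ≫ L.δL (L.P.t L.T.e L.T.e) L.T.e L.T.e
      = L.δL L.T.e L.T.e L.T.e
        ≫ L.P.map (L.T.map (L.hR m) (𝟙 L.T.e)) (𝟙 L.T.e) := by
    have h := L.δL_nat (L.hR m) (𝟙 L.T.e) (𝟙 L.T.e)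
    rw [L.P.map_id'] at h
    exact h
  rw [reassoc_of% h2]
  have inner : L.T.map (L.hR m) (𝟙 L.T.e) ≫ (L.T.r (L.P.t L.T.e L.T.e)).hom ≫ n
      = (L.T.r L.T.e).hom := by
    rw [reassoc_of% (L.T.r_nat (L.hR m)), hRn, Category.comp_id]
  simp only [← L.P.map_comp_left, Category.assoc]
  rw [inner, ← L.T.unitors_equal, L.q2', Iso.inv_hom_id]

lemma b6' (n : L.P.t L.T.e L.T.e ⟶ L.T.e)
    (hn2 : L.P.map (𝟙 L.T.e) m ≫ n = (L.P.r L.T.e).hom) :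
    L.P.map (𝟙 L.T.e) (L.hL m) ≫ (L.P.a L.T.e L.T.e L.T.e).inv
      ≫ L.P.map n (𝟙 L.T.e) = 𝟙 (L.P.t L.T.e L.T.e) := by
  simp only [LDCStr.hL]
  rw [L.P.map_comp_right]
  have h1 : L.P.map (𝟙 L.T.e) (L.P.map m (𝟙 L.T.e)) ≫ (L.P.a L.T.e L.T.e L.T.e).inv
      = (L.P.a L.T.e L.P.e L.T.e).inv ≫ L.P.map (L.P.map (𝟙 L.T.e) m) (𝟙 L.T.e) :=
    L.P.a_inv_nat (𝟙 L.T.e) m (𝟙 L.T.e)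
  have h2 : L.P.map (L.P.map (𝟙 L.T.e) m) (𝟙 L.T.e) ≫ L.P.map n (𝟙 L.T.e)
      = L.P.map (L.P.r L.T.e).hom (𝟙 L.T.e) := by
    rw [← L.P.map_comp_left, hn2]
  have tri : (L.P.a L.T.e L.P.e L.T.e).inv ≫ L.P.map (L.P.r L.T.e).hom (𝟙 L.T.e)
      = L.P.map (𝟙 L.T.e) (L.P.l L.T.e).hom := by
    rw [Iso.inv_comp_eq, L.P.triangle]
  simp only [Category.assoc]
  rw [reassoc_of% h1, h2, tri, L.P.inv_hom_right]

lemma hL_eq_hR (n : L.P.t L.T.e L.T.e ⟶ L.T.e)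
    (hn2 : L.P.map (𝟙 L.T.e) m ≫ n = (L.P.r L.T.e).hom) :
    L.hL m = L.hR m := by
  have hRn : L.hR m ≫ n = 𝟙 L.T.e := by
    simp only [LDCStr.hR, Category.assoc]
    rw [hn2, Iso.inv_hom_id]
  have h1 := L.e1' m n hRn
  have h2 := L.gR_nat m (L.hL m)
  have h3 := L.b6' m n hn2
  calc L.hL m
      = L.hL m ≫ L.gR m (L.P.t L.T.e L.T.e) ≫ (L.P.a L.T.e L.T.e L.T.e).inv
          ≫ L.P.map n (𝟙 L.T.e) := by rw [h1, Category.comp_id]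
    _ = L.gR m L.T.e ≫ L.P.map (𝟙 L.T.e) (L.hL m) ≫ (L.P.a L.T.e L.T.e L.T.e).inv
          ≫ L.P.map n (𝟙 L.T.e) := by rw [reassoc_of% h2]
    _ = L.gR m L.T.e := by rw [h3, Category.comp_id]
    _ = L.hR m := L.gR_top m

lemma isMix_of_h (h : L.hL m = L.hR m) : L.IsMix m := by
  intro A B
  show L.mixR m A B = L.mixL m A B
  rw [← L.big'_hR m A B, ← h, L.big'_hL m A B]

end LDCStr
/-- (Führmann–Pym) Every symmetric linearly distributive category in which `⊥`
carries a `⊗`-comonoid structure `⟨⊥, Δ_⊥, e_⊥⟩` is mix with `m = e_⊥`; dually,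
every symmetric linearly distributive category in which `⊤` carries a
`⊕`-monoid structure `⟨⊤, ∇_⊤, u_⊤⟩` is mix with `m = u_⊤`. -/
theorem sldc_comonoid_or_monoid_implies_mix {V : Type u} [Category.{v} V]
    (S : SLDCStr V) :
    (∀ (Δ : S.L.P.e ⟶ S.L.T.t S.L.P.e S.L.P.e) (e : S.L.P.e ⟶ S.L.T.e),
      S.L.T.IsComonoid S.L.P.e Δ e → S.L.IsMix e) ∧
    (∀ (n : S.L.P.t S.L.T.e S.L.T.e ⟶ S.L.T.e) (u : S.L.P.e ⟶ S.L.T.e),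
      S.L.P.IsMonoid S.L.T.e n u → S.L.IsMix u) := by
  constructor
  · intro Δ e h
    have hΔ : Δ ≫ S.L.kR e = 𝟙 S.L.P.e := by
      simpa only [LDCStr.kR] using h.2.2
    exact S.L.isMix_of_k e (S.L.kL_eq_kR e Δ hΔ)
  · intro n u h
    exact S.L.isMix_of_h u (S.L.hL_eq_hR u n h.2.2)
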